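/- Let Γ⊂ℂ and define d(z,w)=|z−w|/(1+min(|z|,|w|)). If the set logΓ := {log|γ| : γ∈Γ} (of moduli logarithms, with |γ|>0) is separated (i.e., inf over distinct pairs of |log|γ|−log|γ'|| is positive), then Γ is d-separated: inf{d(γ,γ'): γ≠γ'∈Γ} > 0. Conversely, if Γ is d-separated then logΓ is a finite union of separated sequences of real numbers. -/

import Mathlib

/-- the distance `d(z,w) = |z-w| / (1 + min(|z|,|w|))` -/
noncomputable def dd (z w : ℂ) : ℝ :=
  ‖z - w‖ / (1 + min ‖z‖ ‖w‖)

private lemma dir1 (Γ : Set ℂ) (r : ℝ) (hr : 0 < r)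
    (hΓ : ∀ γ ∈ Γ, r ≤ ‖γ‖)
    (ε : ℝ) (hε : 0 < ε)
    (h : ∀ γ ∈ Γ, ∀ γ' ∈ Γ, γ ≠ γ' →
        ε ≤ |Real.log (‖γ‖) - Real.log (‖γ'‖)|) :
    ∃ dΓ : ℝ, 0 < dΓ ∧ ∀ γ ∈ Γ, ∀ γ' ∈ Γ, γ ≠ γ' → dΓ ≤ dd γ γ' := by
  have hexp : 1 < Real.exp ε := Real.one_lt_exp_iff.mpr hε
  refine ⟨r * (Real.exp ε - 1) / (1 + r), div_pos (mul_pos hr (by linarith)) (by linarith), ?_⟩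
  have key : ∀ γ ∈ Γ, ∀ γ' ∈ Γ, γ ≠ γ' → ‖γ‖ ≤ ‖γ'‖ →
      r * (Real.exp ε - 1) / (1 + r) ≤ dd γ γ' := by
    intro γ hγ γ' hγ' hne hle
    have ha : r ≤ ‖γ‖ := hΓ γ hγ
    have ha0 : 0 < ‖γ‖ := lt_of_lt_of_le hr ha
    have hb0 : 0 < ‖γ'‖ := lt_of_lt_of_le ha0 hle
    have hlog := h γ hγ γ' hγ' hne
    have hlogle : Real.log (‖γ‖) ≤ Real.log (‖γ'‖) :=
      Real.log_le_log ha0 hle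
    have hεle : ε ≤ Real.log (‖γ'‖) - Real.log (‖γ‖) := by
      rw [abs_sub_comm, abs_of_nonneg (by linarith)] at hlog; exact hlog
    -- |γ'| ≥ exp ε * |γ|
    have hmul : Real.exp ε * ‖γ‖ ≤ ‖γ'‖ := by
      have := Real.exp_le_exp.mpr (by linarith :
        ε + Real.log (‖γ‖) ≤ Real.log (‖γ'‖))
      rwa [Real.exp_add, Real.exp_log ha0, Real.exp_log hb0] at this
    have hsub : ‖γ'‖ - ‖γ‖ ≤ ‖γ - γ'‖ := by
      have := norm_sub_norm_le γ' γ
      rw [norm_sub_rev]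
      simpa using this
    have hmin : min (‖γ‖) (‖γ'‖) = ‖γ‖ := min_eq_left hle
    rw [dd, hmin]
    rw [div_le_div_iff₀ (by linarith) (by linarith)]
    have h1 : (Real.exp ε - 1) * ‖γ‖ ≤ ‖γ - γ'‖ := by nlinarith
    nlinarith [norm_nonneg (γ - γ')]
  intro γ hγ γ' hγ' hne
  rcases le_total (‖γ‖) (‖γ'‖) with hle | hle
  · exact key γ hγ γ' hγ' hne hle
  · have := key γ' hγ' γ hγ (Ne.symm hne) hle
    have hsym : dd γ γ' = dd γ' γ := by
      rw [dd, dd, norm_sub_rev, min_comm]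
    rw [hsym]; exact this

private lemma dir2 (Γ : Set ℂ) (r : ℝ) (hr : 0 < r)
    (hΓ : ∀ γ ∈ Γ, r ≤ ‖γ‖)
    (dΓ : ℝ) (hd : 0 < dΓ)
    (hsep : ∀ γ ∈ Γ, ∀ γ' ∈ Γ, γ ≠ γ' → dΓ ≤ dd γ γ') :
    ∃ (k : ℕ) (P : Fin k → Set ℂ), Γ = ⋃ i : Fin k, P i ∧
        ∀ i : Fin k, ∃ ε : ℝ, 0 < ε ∧ ∀ γ ∈ P i, ∀ γ' ∈ P i, γ ≠ γ' →
          ε ≤ |Real.log (‖γ‖) - Real.log (‖γ'‖)| := by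
  classical
  obtain ⟨t, htfin, htcov⟩ :=
    Metric.totallyBounded_iff.mp
      (isCompact_closedBall (0:ℂ) (Real.exp 2)).totallyBounded (dΓ/2) (by linarith)
  set n : ℂ → ℤ := fun z => ⌊Real.log (‖z‖) / 2⌋ with hn
  set S : ℂ → ℂ := fun z => z * ((Real.exp (-(2 * (n z : ℝ))) : ℝ) : ℂ) with hS
  set C : ℂ → ℂ := fun z =>
    if h : ∃ y ∈ t, S z ∈ Metric.ball y (dΓ/2) then h.choose else 0 with hC
  set T : Set ℂ := insert (0:ℂ) t with hT
  have hTfin : T.Finite := htfin.insert 0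
  have hCT : ∀ z, C z ∈ T := by
    intro z
    by_cases h : ∃ y ∈ t, S z ∈ Metric.ball y (dΓ/2)
    · simp only [hC, dif_pos h]; exact Set.mem_insert_of_mem _ h.choose_spec.1
    · simp only [hC, dif_neg h]; exact Set.mem_insert _ _
  have habs : ∀ z ∈ Γ, 0 < ‖z‖ := fun z hz => lt_of_lt_of_le hr (hΓ z hz)
  have hfl : ∀ z ∈ Γ, 2 * (n z : ℝ) ≤ Real.log (‖z‖) ∧
      Real.log (‖z‖) < 2 * (n z : ℝ) + 2 := by
    intro z hz
    have h1 := Int.floor_le (Real.log (‖z‖) / 2)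
    have h2 := Int.lt_floor_add_one (Real.log (‖z‖) / 2)
    exact ⟨by simpa [hn] using by linarith, by simpa [hn] using by linarith⟩
  have hSabs : ∀ z, ‖S z‖
      = ‖z‖ * Real.exp (-(2 * (n z : ℝ))) := by
    intro z
    show ‖z * ((Real.exp (-(2 * (n z : ℝ))) : ℝ) : ℂ)‖
      = ‖z‖ * Real.exp (-(2 * (n z : ℝ)))
    rw [norm_mul, Complex.norm_real, Real.norm_of_nonneg (Real.exp_pos _).le]
  have hlow : ∀ z ∈ Γ, Real.exp (2 * (n z : ℝ)) ≤ ‖z‖ := by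
    intro z hz
    calc Real.exp (2 * (n z : ℝ)) ≤ Real.exp (Real.log (‖z‖)) :=
          Real.exp_le_exp.mpr (hfl z hz).1
      _ = ‖z‖ := Real.exp_log (habs z hz)
  have hSball : ∀ z ∈ Γ, S z ∈ Metric.closedBall (0:ℂ) (Real.exp 2) := by
    intro z hz
    rw [Metric.mem_closedBall, Complex.dist_eq, sub_zero, hSabs z]
    have hub : ‖z‖ < Real.exp (2 * (n z : ℝ) + 2) := by
      calc ‖z‖ = Real.exp (Real.log (‖z‖)) :=
            (Real.exp_log (habs z hz)).symm
        _ < Real.exp (2 * (n z : ℝ) + 2) := Real.exp_lt_exp.mpr (hfl z hz).2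
    calc ‖z‖ * Real.exp (-(2 * (n z : ℝ)))
        ≤ Real.exp (2 * (n z : ℝ) + 2) * Real.exp (-(2 * (n z : ℝ))) :=
          mul_le_mul_of_nonneg_right hub.le (Real.exp_pos _).le
      _ = Real.exp 2 := by rw [← Real.exp_add]; ring_nf
  have hCball : ∀ z ∈ Γ, S z ∈ Metric.ball (C z) (dΓ/2) := by
    intro z hz
    have hmem := htcov (hSball z hz)
    simp only [Set.mem_iUnion] at hmem
    obtain ⟨y, hy, hby⟩ := hmem
    have h : ∃ y ∈ t, S z ∈ Metric.ball y (dΓ/2) := ⟨y, hy, hby⟩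
    simp only [hC, dif_pos h]
    exact h.choose_spec.2
  haveI : Fintype T := hTfin.fintype
  set c : ℂ → ZMod 2 × T := fun z => ((n z : ZMod 2), ⟨C z, hCT z⟩) with hc
  set k := Fintype.card (ZMod 2 × T) with hk
  set e : (ZMod 2 × T) ≃ Fin k := Fintype.equivFin _ with he
  refine ⟨k, fun i => Γ ∩ {z | e (c z) = i}, ?_, ?_⟩
  · ext z
    simp only [Set.mem_iUnion, Set.mem_inter_iff, Set.mem_setOf_eq]
    exact ⟨fun hz => ⟨e (c z), hz, rfl⟩, fun ⟨i, hz, _⟩ => hz⟩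
  · intro i
    refine ⟨2, by norm_num, ?_⟩
    rintro γ ⟨hγ, hγi⟩ γ' ⟨hγ', hγi'⟩ hne
    have hcc : c γ = c γ' := e.injective ((hγi :).trans (hγi' :).symm)
    have hpar : ((n γ : ZMod 2)) = ((n γ' : ZMod 2)) := congrArg Prod.fst hcc
    have hctr : C γ = C γ' := congrArg (fun x => (x.2 : ℂ)) hcc
    by_cases hnn : n γ = n γ'
    · exfalso
      have hd1 : dist (S γ) (S γ') < dΓ := by
        have h1 := hCball γ hγ
        have h2 := hCball γ' hγ'
        rw [hctr] at h1
        rw [Metric.mem_ball] at h1 h2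
        calc dist (S γ) (S γ') ≤ dist (S γ) (C γ') + dist (C γ') (S γ') :=
              dist_triangle _ _ _
          _ < dΓ/2 + dΓ/2 := by rw [dist_comm (C γ')]; exact add_lt_add h1 h2
          _ = dΓ := by ring
      have hsep' := hsep γ hγ γ' hγ' hne
      rw [dd] at hsep'
      have hden : 0 < 1 + min (‖γ‖) (‖γ'‖) := by
        have h1 := habs γ hγ; have h2 := habs γ' hγ'
        have := lt_min h1 h2
        linarith
      have habsge : dΓ * (1 + min (‖γ‖) (‖γ'‖))
          ≤ ‖γ - γ'‖ := by
        rw [le_div_iff₀ hden] at hsep'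
        exact hsep'
      have hminge : Real.exp (2 * (n γ : ℝ)) ≤ min (‖γ‖) (‖γ'‖) := by
        refine le_min (hlow γ hγ) ?_
        rw [show n γ = n γ' from hnn]
        exact hlow γ' hγ'
      have hdist : dist (S γ) (S γ')
          = ‖γ - γ'‖ * Real.exp (-(2 * (n γ : ℝ))) := by
        rw [Complex.dist_eq]
        show ‖γ * ((Real.exp (-(2 * (n γ : ℝ))) : ℝ) : ℂ)
          - γ' * ((Real.exp (-(2 * (n γ' : ℝ))) : ℝ) : ℂ)‖ = _
        rw [show n γ' = n γ from hnn.symm, ← sub_mul, norm_mul, Complex.norm_real,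
          Real.norm_of_nonneg (Real.exp_pos _).le]
      set E := Real.exp (2 * (n γ : ℝ)) with hE'
      set E' := Real.exp (-(2 * (n γ : ℝ))) with hE''
      have hE : 0 < E' := Real.exp_pos _
      have hEE : E * E' = 1 := by rw [hE', hE'', ← Real.exp_add]; simp
      have hm1 : dΓ * (1 + min (‖γ‖) (‖γ'‖)) * E'
          ≤ ‖γ - γ'‖ * E' :=
        mul_le_mul_of_nonneg_right habsge hE.le
      have hm2 : dΓ * (E * E') ≤ dΓ * (min (‖γ‖) (‖γ'‖) * E') := by
        apply mul_le_mul_of_nonneg_left _ hd.le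
        exact mul_le_mul_of_nonneg_right hminge hE.le
      rw [hdist] at hd1
      nlinarith
    · have hdvd : (2:ℤ) ∣ n γ' - n γ := by
        rwa [ZMod.intCast_eq_intCast_iff_dvd_sub] at hpar
      have hne0 : n γ' - n γ ≠ 0 := fun h => hnn (by omega)
      have h2le : 2 ≤ |n γ - n γ'| := by
        rw [abs_sub_comm]
        exact Int.le_of_dvd (abs_pos.mpr hne0) ((dvd_abs _ _).mpr hdvd)
      have hf := hfl γ hγ
      have hf' := hfl γ' hγ'
      rcases abs_cases (n γ - n γ') with ⟨heq, _⟩ | ⟨heq, _⟩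
      · have h2 : (2:ℤ) ≤ n γ - n γ' := by rw [← heq]; exact h2le
        have hcast : (n γ' : ℝ) + 2 ≤ (n γ : ℝ) := by exact_mod_cast by omega
        rw [abs_of_nonneg (by linarith)]
        linarith
      · have h2 : (2:ℤ) ≤ n γ' - n γ := by
          have := heq ▸ h2le; omega
        have hcast : (n γ : ℝ) + 2 ≤ (n γ' : ℝ) := by exact_mod_cast by omega
        rw [abs_of_nonpos (by linarith)]
        linarith

theorem d_separated_iff_log_separated (Γ : Set ℂ) (r : ℝ) (hr : 0 < r)
    (hΓ : ∀ γ ∈ Γ, r ≤ ‖γ‖) :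
    -- if log Γ is separated then Γ is d-separated
    ((∃ ε : ℝ, 0 < ε ∧ ∀ γ ∈ Γ, ∀ γ' ∈ Γ, γ ≠ γ' →
        ε ≤ |Real.log (‖γ‖) - Real.log (‖γ'‖)|) →
      ∃ dΓ : ℝ, 0 < dΓ ∧ ∀ γ ∈ Γ, ∀ γ' ∈ Γ, γ ≠ γ' → dΓ ≤ dd γ γ') ∧
    -- if Γ is d-separated then log Γ is a finite union of separated sequences
    ((∃ dΓ : ℝ, 0 < dΓ ∧ ∀ γ ∈ Γ, ∀ γ' ∈ Γ, γ ≠ γ' → dΓ ≤ dd γ γ') →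
      ∃ (k : ℕ) (P : Fin k → Set ℂ), Γ = ⋃ i : Fin k, P i ∧
        ∀ i : Fin k, ∃ ε : ℝ, 0 < ε ∧ ∀ γ ∈ P i, ∀ γ' ∈ P i, γ ≠ γ' →
          ε ≤ |Real.log (‖γ‖) - Real.log (‖γ'‖)|) := by
  constructor
  · rintro ⟨ε, hε, h⟩
    exact dir1 Γ r hr hΓ ε hε h
  · rintro ⟨dΓ, hd, hsep⟩
    exact dir2 Γ r hr hΓ dΓ hd hsep
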